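/- Let N be an additive subgroup of ℚⁿ containing ℤⁿ. Then the monoid P(N) = {x ∈ N : xᵢ ≥ 0 for all i} is generated as an additive monoid by the set {e₁,…,eₙ} ∪ {x ∈ N : 0 ≤ xᵢ < 1 for all i}; that is, every element of P(N) is a finite sum of standard basis vectors eᵢ and of elements of N all of whose coordinates lie in [0,1). -/

import Mathlib

/-- **(Gordan-type generation.)** If `N` is an additive subgroup of `ℚⁿ` containing `ℤⁿ`,
then the monoid `P(N) = {x ∈ N : xᵢ ≥ 0 ∀i}` is generated as an additive monoid by the
standard basis vectors `e₁,…,eₙ` together with the points of `N` lying in the half-open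
cube `[0,1)ⁿ`. -/
theorem stmt_5 {n : ℕ} (N : AddSubgroup (Fin n → ℚ))
    (hZ : ∀ q : Fin n → ℚ, (∀ i, ∃ m : ℤ, q i = (m : ℚ)) → q ∈ N) :
    (AddSubmonoid.closure
        ({y | ∃ i : Fin n, y = Pi.single i (1 : ℚ)} ∪
          {y : Fin n → ℚ | y ∈ N ∧ ∀ i, 0 ≤ y i ∧ y i < 1}) : Set (Fin n → ℚ))
      = {x : Fin n → ℚ | x ∈ N ∧ ∀ i, 0 ≤ x i} := by
  apply Set.Subset.antisymm
  · intro x hx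
    induction hx using AddSubmonoid.closure_induction with
    | mem y hy =>
      rcases hy with ⟨i, rfl⟩ | ⟨hyN, hy⟩
      · refine ⟨hZ _ fun j => ?_, fun j => ?_⟩
        · rcases eq_or_ne i j with rfl | h
          · exact ⟨1, by simp⟩
          · exact ⟨0, by simp [Pi.single_apply, h]⟩
        · rcases eq_or_ne i j with rfl | h
          · simp
          · simp [Pi.single_apply, h]
      · exact ⟨hyN, fun i => (hy i).1⟩
    | zero => exact ⟨N.zero_mem, fun i => le_refl 0⟩
    | add a b _ _ ha hb =>
      exact ⟨N.add_mem ha.1 hb.1, fun i => add_nonneg (ha.2 i) (hb.2 i)⟩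
  · rintro x ⟨hxN, hxpos⟩
    set g : Fin n → ℚ := fun i => (⌊x i⌋ : ℚ) with hg
    have hgN : g ∈ N := hZ g fun i => ⟨⌊x i⌋, rfl⟩
    have hfN : (fun i => Int.fract (x i)) ∈ N := by
      have : (fun i => Int.fract (x i)) = x - g := by
        funext i; exact (Int.self_sub_floor (x i)).symm
      rw [this]; exact N.sub_mem hxN hgN
    have hx_eq : x = (fun i => Int.fract (x i)) +
        ∑ i : Fin n, (⌊x i⌋).toNat • Pi.single i (1 : ℚ) := by
      funext j
      have hsum : (∑ i : Fin n, (⌊x i⌋).toNat • Pi.single i (1 : ℚ)) j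
          = ((⌊x j⌋).toNat : ℚ) := by
        simp [Finset.sum_apply, Pi.single_apply]
      have hnat : ((⌊x j⌋).toNat : ℚ) = (⌊x j⌋ : ℚ) := by
        exact_mod_cast congrArg (Int.cast : ℤ → ℚ)
          (Int.toNat_of_nonneg (Int.floor_nonneg.mpr (hxpos j)))
      simp only [Pi.add_apply, hsum, hnat]
      rw [Int.fract_add_floor]
    rw [hx_eq, SetLike.mem_coe]
    have h1 : (fun i => Int.fract (x i)) ∈ AddSubmonoid.closure
        ({y | ∃ i : Fin n, y = Pi.single i (1 : ℚ)} ∪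
          {y : Fin n → ℚ | y ∈ N ∧ ∀ i, 0 ≤ y i ∧ y i < 1}) :=
      AddSubmonoid.subset_closure
        (Or.inr ⟨hfN, fun i => ⟨Int.fract_nonneg _, Int.fract_lt_one _⟩⟩)
    have h2 : ∀ i : Fin n, Pi.single i (1 : ℚ) ∈ AddSubmonoid.closure
        ({y | ∃ i : Fin n, y = Pi.single i (1 : ℚ)} ∪
          {y : Fin n → ℚ | y ∈ N ∧ ∀ i, 0 ≤ y i ∧ y i < 1}) := fun i =>
      AddSubmonoid.subset_closure (Or.inl ⟨i, rfl⟩)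
    exact AddSubmonoid.add_mem _ h1 (AddSubmonoid.sum_mem _ fun i _ =>
      AddSubmonoid.nsmul_mem _ (h2 i) _)
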